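/- There exists a countable locally finite group G with a proper left invariant metric d_G such that (G, d_G) has infinite asymptotic Assouad-Nagata dimension, i.e. for every n there is no linear-plus-constant n-dimensional control function for (G, d_G). -/

import Mathlib

def ScaleChain {X : Type*} (d : X → X → ℝ) (s : ℝ) (U : Set X) (x y : X) : Prop :=
  ∃ (m : ℕ) (c : ℕ → X), c 0 = x ∧ c m = y ∧ (∀ i ≤ m, c i ∈ U) ∧
    ∀ i < m, d (c i) (c (i + 1)) < s

def IsControlFun {X : Type*} (d : X → X → ℝ) (n : ℕ) (D : ℝ → ℝ) : Prop :=
  ∀ s : ℝ, 0 < s → ∃ U : Fin (n + 1) → Set X,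
    (∀ x, ∃ i, x ∈ U i) ∧ ∀ i x y, ScaleChain d s (U i) x y → d x y ≤ D s

/-- Asymptotic Assouad-Nagata dimension at most `n`. -/
def ANdimLE {X : Type*} (d : X → X → ℝ) (n : ℕ) : Prop :=
  ∃ C : ℝ, 0 < C ∧ ∃ b : ℝ, IsControlFun d n (fun s => C * s + b)

/-- Asymptotic dimension at most `n`. -/
def AsdimLE {X : Type*} (d : X → X → ℝ) (n : ℕ) : Prop :=
  ∃ D : ℝ → ℝ, IsControlFun d n D

/-- `d` is a proper left invariant metric on the group `G`. -/
def IsPLIMetric {G : Type*} [Group G] (d : G → G → ℝ) : Prop :=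
  (∀ x y : G, d x y = 0 ↔ x = y) ∧ (∀ x y : G, d x y = d y x) ∧
    (∀ x y z : G, d x z ≤ d x y + d y z) ∧
    (∀ g x y : G, d (g * x) (g * y) = d x y) ∧
    ∀ K : ℝ, {g : G | d 1 g ≤ K}.Finite

/-- A group is locally finite if every finitely generated subgroup is finite. -/
def LocallyFiniteGroup (G : Type*) [Group G] : Prop :=
  ∀ s : Finset G, ((Subgroup.closure (s : Set G) : Subgroup G) : Set G).Finite

namespace LFGConstr

def tau (m : ℕ) [NeZero m] (a : ZMod m) : ℕ := min a.val (m - a.val)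

lemma tau_eq_zero_iff (m : ℕ) [NeZero m] (a : ZMod m) : tau m a = 0 ↔ a = 0 := by
  have h := ZMod.val_lt a
  rw [tau, ← ZMod.val_eq_zero]
  omega

lemma tau_neg (m : ℕ) [NeZero m] (a : ZMod m) : tau m (-a) = tau m a := by
  have h := ZMod.val_lt a
  rw [tau, tau, ZMod.neg_val]
  split
  · subst ‹a = 0›; simp
  · have : a.val ≠ 0 := by rwa [Ne, ZMod.val_eq_zero]
    omega

lemma tau_add_le (m : ℕ) [NeZero m] (a b : ZMod m) :
    tau m (a + b) ≤ tau m a + tau m b := by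
  have ha := ZMod.val_lt a
  have hb := ZMod.val_lt b
  have hab : (a + b).val = (a.val + b.val) % m := ZMod.val_add a b
  have hmod : (a.val + b.val) % m = if a.val + b.val < m then a.val + b.val
      else a.val + b.val - m := by
    split
    · exact Nat.mod_eq_of_lt ‹_›
    · rw [Nat.mod_eq_sub_mod (by omega), Nat.mod_eq_of_lt (by omega)]
  rw [tau, tau, tau, hab, hmod]
  split <;> omega

/-- value of `a : ℕ` cast into `ZMod (2K+1)`, for `a ≤ K`, has `tau` equal to `a`. -/
lemma tau_natCast (K a : ℕ) (ha : a ≤ K) :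
    tau (2 * K + 1) ((a : ZMod (2 * K + 1))) = a := by
  have hv : ((a : ZMod (2 * K + 1))).val = a := by
    rw [ZMod.val_natCast, Nat.mod_eq_of_lt (by omega)]
  rw [tau, hv]; omega

lemma tau_natCast_sub (K a b : ℕ) (ha : a ≤ K) (hb : b ≤ a) :
    tau (2 * K + 1) ((a : ZMod (2 * K + 1)) - (b : ZMod (2 * K + 1))) = a - b := by
  have : (a : ZMod (2 * K + 1)) - (b : ZMod (2 * K + 1)) = ((a - b : ℕ) : ZMod (2 * K + 1)) := by
    have := Nat.cast_sub (R := ZMod (2 * K + 1)) hb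
    rw [this]
  rw [this, tau_natCast K _ (by omega)]

lemma tau_natCast_sub' (m K a b : ℕ) [NeZero m] (hm : m = 2 * K + 1) (ha : a ≤ K)
    (hb : b ≤ a) :
    tau m ((a : ZMod m) - (b : ZMod m)) = a - b := by
  subst hm
  exact tau_natCast_sub K a b ha hb

/-! block data -/

def dimj (j : ℕ) : ℕ := j.unpair.1 + 1
def kj (j : ℕ) : ℕ := j.unpair.2 + 1
def mj (j : ℕ) : ℕ := 2 * kj j + 1

instance (j : ℕ) : NeZero (mj j) := ⟨by unfold mj; omega⟩

abbrev Blk (j : ℕ) : Type := Fin (dimj j) → ZMod (mj j)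

/-- sup norm on a block -/
def Mn (j : ℕ) (v : Blk j) : ℕ := Finset.univ.sup fun i => tau (mj j) (v i)

lemma le_Mn (j : ℕ) (v : Blk j) (i : Fin (dimj j)) : tau (mj j) (v i) ≤ Mn j v :=
  Finset.le_sup (f := fun i => tau (mj j) (v i)) (Finset.mem_univ i)

lemma Mn_eq_zero_iff (j : ℕ) (v : Blk j) : Mn j v = 0 ↔ v = 0 := by
  constructor
  · intro h
    funext i
    have h2 := le_Mn j v i
    rw [h, Nat.le_zero, tau_eq_zero_iff] at h2
    exact h2
  · rintro rfl
    simp [Mn, tau_eq_zero_iff]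

lemma Mn_neg (j : ℕ) (v : Blk j) : Mn j (-v) = Mn j v := by
  unfold Mn
  congr 1
  funext i
  exact tau_neg _ _

lemma Mn_add_le (j : ℕ) (v w : Blk j) : Mn j (v + w) ≤ Mn j v + Mn j w := by
  refine Finset.sup_le fun i _ => ?_
  calc tau (mj j) (v i + w i) ≤ tau (mj j) (v i) + tau (mj j) (w i) := tau_add_le _ _ _
  _ ≤ Mn j v + Mn j w := add_le_add (le_Mn j v i) (le_Mn j w i)

lemma one_le_Mn (j : ℕ) (v : Blk j) (hv : v ≠ 0) : 1 ≤ Mn j v := by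
  rcases Nat.eq_zero_or_pos (Mn j v) with h | h
  · exact absurd ((Mn_eq_zero_iff j v).mp h) hv
  · omega

/-! the group -/

abbrev A : Type := Π₀ j : ℕ, Blk j

/-- weighted norm -/
def Nn (a : A) : ℕ := ∑ j ∈ a.support, (j + 1) * Mn j (a j)

lemma Nn_eq_sum (a : A) (T : Finset ℕ) (hT : a.support ⊆ T) :
    Nn a = ∑ j ∈ T, (j + 1) * Mn j (a j) := by
  refine Finset.sum_subset hT fun j _ hj => ?_
  rw [DFinsupp.notMem_support_iff.mp hj, (Mn_eq_zero_iff j 0).mpr rfl, mul_zero]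

lemma Nn_eq_zero_iff (a : A) : Nn a = 0 ↔ a = 0 := by
  constructor
  · intro h
    rw [← DFinsupp.support_eq_empty]
    by_contra hne
    obtain ⟨j, hj⟩ := Finset.nonempty_iff_ne_empty.mpr hne
    have hj0 : a j ≠ 0 := DFinsupp.mem_support_iff.mp hj
    have hterm : 1 ≤ (j + 1) * Mn j (a j) :=
      Nat.one_le_iff_ne_zero.mpr (by
        have := one_le_Mn j (a j) hj0
        positivity)
    have : (j + 1) * Mn j (a j) ≤ Nn a :=
      Finset.single_le_sum (f := fun j => (j + 1) * Mn j (a j)) (fun _ _ => Nat.zero_le _) hj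
    omega
  · rintro rfl
    simp [Nn]

lemma Nn_neg (a : A) : Nn (-a) = Nn a := by
  rw [Nn_eq_sum (-a) a.support (by rw [DFinsupp.support_neg]), Nn]
  congr 1
  funext j
  rw [DFinsupp.neg_apply, Mn_neg]

lemma Nn_add_le (a b : A) : Nn (a + b) ≤ Nn a + Nn b := by
  set T := a.support ∪ b.support with hT
  have h1 : (a + b).support ⊆ T := (DFinsupp.support_add).trans le_rfl
  rw [Nn_eq_sum (a + b) T h1, Nn_eq_sum a T Finset.subset_union_left,
    Nn_eq_sum b T Finset.subset_union_right, ← Finset.sum_add_distrib]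
  refine Finset.sum_le_sum fun j _ => ?_
  rw [DFinsupp.add_apply, ← Nat.mul_add]
  exact Nat.mul_le_mul_left _ (Mn_add_le j (a j) (b j))

lemma Nn_single (j : ℕ) (v : Blk j) : Nn (DFinsupp.single j v) = (j + 1) * Mn j v := by
  rw [Nn_eq_sum _ {j} DFinsupp.support_single_subset, Finset.sum_singleton,
    DFinsupp.single_eq_same]

lemma le_Nn_of_mem_support (a : A) (j : ℕ) (hj : j ∈ a.support) : j + 1 ≤ Nn a := by
  have h1 : 1 ≤ Mn j (a j) := one_le_Mn _ _ (DFinsupp.mem_support_iff.mp hj)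
  have : (j + 1) * Mn j (a j) ≤ Nn a :=
    Finset.single_le_sum (f := fun j => (j + 1) * Mn j (a j)) (fun _ _ => Nat.zero_le _) hj
  nlinarith

/-- sets of bounded support are finite -/
lemma finite_bddsupport (B : ℕ) : {a : A | ∀ j, B ≤ j → a j = 0}.Finite := by
  have hinj : Set.InjOn (fun (a : A) => fun i : Fin B => a i) {a : A | ∀ j, B ≤ j → a j = 0} := by
    intro a ha b hb hab
    refine DFinsupp.ext fun j => ?_
    rcases lt_or_ge j B with hj | hj
    · exact congrFun hab ⟨j, hj⟩
    · rw [ha j hj, hb j hj]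
  exact Set.Finite.of_finite_image (Set.toFinite _) hinj


/-! the group with its metric -/

abbrev Gp : Type := Multiplicative A

noncomputable def dG (x y : Gp) : ℝ :=
  (Nn (Multiplicative.toAdd x - Multiplicative.toAdd y) : ℝ)

lemma dG_eq_zero_iff (x y : Gp) : dG x y = 0 ↔ x = y := by
  rw [dG, Nat.cast_eq_zero, Nn_eq_zero_iff, sub_eq_zero]
  exact ⟨fun h => Multiplicative.toAdd.injective h, fun h => by rw [h]⟩

lemma dG_symm (x y : Gp) : dG x y = dG y x := by
  rw [dG, dG, ← Nn_neg, neg_sub]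

lemma dG_triangle (x y z : Gp) : dG x z ≤ dG x y + dG y z := by
  rw [dG, dG, dG, ← Nat.cast_add, Nat.cast_le]
  have : Multiplicative.toAdd x - Multiplicative.toAdd z =
      (Multiplicative.toAdd x - Multiplicative.toAdd y) +
      (Multiplicative.toAdd y - Multiplicative.toAdd z) := by abel
  rw [this]
  exact Nn_add_le _ _

lemma dG_left_inv (g x y : Gp) : dG (g * x) (g * y) = dG x y := by
  rw [dG, dG, toAdd_mul, toAdd_mul]
  congr 2
  abel

lemma dG_ball_finite (K : ℝ) : {g : Gp | dG 1 g ≤ K}.Finite := by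
  obtain ⟨B, hB⟩ := exists_nat_gt K
  have hsub : {g : Gp | dG 1 g ≤ K} ⊆
      Multiplicative.toAdd ⁻¹' {a : A | ∀ j, B ≤ j → a j = 0} := by
    intro g hg
    simp only [Set.mem_setOf_eq, dG, toAdd_one, zero_sub, Nn_neg] at hg
    intro j hj
    by_contra hne
    have hjs : j ∈ (Multiplicative.toAdd g).support := DFinsupp.mem_support_iff.mpr hne
    have h1 := le_Nn_of_mem_support _ j hjs
    have h2 : ((Nn (Multiplicative.toAdd g) : ℕ) : ℝ) < (B : ℝ) := lt_of_le_of_lt hg hB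
    rw [Nat.cast_lt] at h2
    omega
  exact Set.Finite.subset (Set.Finite.preimage (Set.injOn_of_injective
    Multiplicative.toAdd.injective) (finite_bddsupport B)) hsub

lemma countable_Gp : Countable Gp := by
  have : Countable A := inferInstance
  exact Countable.of_equiv A Multiplicative.ofAdd

/-- the bounded-support subgroup -/
def bddSubgroup (B : ℕ) : Subgroup Gp where
  carrier := {g | ∀ j, B ≤ j → Multiplicative.toAdd g j = 0}
  one_mem' := by
    intro j _
    simp
  mul_mem' := by
    intro a b ha hb j hj
    rw [toAdd_mul, DFinsupp.add_apply, ha j hj, hb j hj, add_zero]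
  inv_mem' := by
    intro a ha j hj
    rw [toAdd_inv, DFinsupp.neg_apply, ha j hj, neg_zero]

lemma locallyFinite_Gp : ∀ s : Finset Gp,
    ((Subgroup.closure (s : Set Gp) : Subgroup Gp) : Set Gp).Finite := by
  intro s
  set B : ℕ := (s.sup fun g => (Multiplicative.toAdd g).support.sup id) + 1 with hB
  have hsS : (s : Set Gp) ⊆ (bddSubgroup B : Set Gp) := by
    intro g hg j hj
    by_contra hne
    have hjs : j ∈ (Multiplicative.toAdd g).support := DFinsupp.mem_support_iff.mpr hne
    have h1 : j ≤ (Multiplicative.toAdd g).support.sup id := Finset.le_sup (f := id) hjs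
    have h2 : (Multiplicative.toAdd g).support.sup id ≤
        s.sup fun g => (Multiplicative.toAdd g).support.sup id :=
      Finset.le_sup (f := fun g => (Multiplicative.toAdd g).support.sup id) hg
    omega
  have hcl : (Subgroup.closure (s : Set Gp) : Set Gp) ⊆ (bddSubgroup B : Set Gp) :=
    (Subgroup.closure_le (bddSubgroup B)).mpr hsS
  refine Set.Finite.subset ?_ hcl
  have : (bddSubgroup B : Set Gp) ⊆
      Multiplicative.toAdd ⁻¹' {a : A | ∀ j, B ≤ j → a j = 0} := fun g hg => hg
  exact Set.Finite.subset (Set.Finite.preimage (Set.injOn_of_injective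
    Multiplicative.toAdd.injective) (finite_bddsupport B)) this



open Combinatorics in
lemma not_ANdimLE (n : ℕ) : ¬ ANdimLE dG n := by
  rintro ⟨C, hC, b, hcf⟩
  obtain ⟨K0, hK0⟩ := exists_nat_gt (2 * C + |b| + 2)
  set K : ℕ := K0 + 1 with hK
  have hKR : 2 * C + |b| + 2 < (K : ℝ) := by
    refine lt_of_lt_of_le hK0 ?_
    exact_mod_cast Nat.le_succ K0
  obtain ⟨ι, ιfin, hHJ⟩ :=
    Combinatorics.Line.exists_mono_in_high_dimension (Fin (K + 1)) (Fin (n + 1))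
  have hne : Nonempty ι := by
    obtain ⟨l0, -⟩ := hHJ fun _ => (0 : Fin (n + 1))
    obtain ⟨i0, -⟩ := l0.proper
    exact ⟨i0⟩
  set D : ℕ := Fintype.card ι with hDdef
  have hD : 1 ≤ D := Fintype.card_pos
  set j : ℕ := Nat.pair (D - 1) (K - 1) with hj
  have hdim : dimj j = D := by
    rw [dimj, hj, Nat.unpair_pair]
    omega
  have hkj : kj j = K := by
    rw [kj, hj, Nat.unpair_pair]
    omega
  have hmj : mj j = 2 * K + 1 := by rw [mj, hkj]
  set w : ℕ := j + 1 with hw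
  set s : ℝ := (w : ℝ) + 1 with hs
  have hw1 : (1 : ℝ) ≤ (w : ℝ) := by exact_mod_cast Nat.one_le_iff_ne_zero.mpr (by omega)
  have hs0 : 0 < s := by rw [hs]; linarith
  obtain ⟨U, hcov, hctrl⟩ := hcf s hs0
  let e : ι ≃ Fin D := Fintype.equivFin ι
  let vmap : (ι → Fin (K + 1)) → Blk j := fun x i =>
    (((x (e.symm (Fin.cast hdim i))).val : ℕ) : ZMod (mj j))
  let p : (ι → Fin (K + 1)) → Gp := fun x => Multiplicative.ofAdd (DFinsupp.single j (vmap x))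
  have hdist : ∀ x y, dG (p x) (p y) = ((w * Mn j (vmap x - vmap y) : ℕ) : ℝ) := by
    intro x y
    rw [dG]
    congr 1
    show Nn (Multiplicative.toAdd (p x) - Multiplicative.toAdd (p y)) = _
    have : Multiplicative.toAdd (p x) - Multiplicative.toAdd (p y)
        = DFinsupp.single j (vmap x - vmap y) := by
      simp only [p, toAdd_ofAdd]
      rw [DFinsupp.single_sub]
    rw [this, Nn_single]
  let χ : (ι → Fin (K + 1)) → Fin (n + 1) := fun x => (hcov (p x)).choose
  have hχ : ∀ x, p x ∈ U (χ x) := fun x => (hcov (p x)).choose_spec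
  obtain ⟨l, cι, hl⟩ := hHJ χ
  let q : ℕ → Fin (K + 1) := fun t => ⟨min t K, by omega⟩
  let ch : ℕ → Gp := fun t => p (l (q t))
  -- the chain is a scale chain at scale s in U cι
  have hchain : ScaleChain dG s (U cι) (p (l (q 0))) (p (l (q K))) := by
    refine ⟨K, ch, rfl, rfl, fun t _ => ?_, fun t ht => ?_⟩
    · show p (l (q t)) ∈ U cι
      have := hχ (l (q t))
      rwa [hl (q t)] at this
    · show dG (p (l (q t))) (p (l (q (t + 1)))) < s
      have hdeq := hdist (l (q t)) (l (q (t + 1)))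
      rw [hdeq]
      have hMn : Mn j (vmap (l (q t)) - vmap (l (q (t + 1)))) ≤ 1 := by
        refine Finset.sup_le fun i _ => ?_
        set i' : ι := e.symm (Fin.cast hdim i)
        have hsub : (vmap (l (q t)) - vmap (l (q (t + 1)))) i
            = vmap (l (q t)) i - vmap (l (q (t + 1))) i := rfl
        rw [hsub]
        cases h : l.idxFun i' with
        | some a0 =>
          have h1 : l (q t) (e.symm (Fin.cast hdim i)) = a0 := Line.apply_some h
          have h2 : l (q (t + 1)) (e.symm (Fin.cast hdim i)) = a0 := Line.apply_some h
          show tau (mj j) _ ≤ 1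
          simp only [vmap, h1, h2, sub_self]
          rw [tau_eq_zero_iff (mj j) 0 |>.mpr rfl]
          omega
        | none =>
          have h1 : l (q t) (e.symm (Fin.cast hdim i)) = q t := Line.apply_none l _ i' h
          have h2 : l (q (t + 1)) (e.symm (Fin.cast hdim i)) = q (t + 1) := Line.apply_none l _ i' h
          show tau (mj j) _ ≤ 1
          simp only [vmap, h1, h2]
          simp only [q]
          rw [show t ⊓ K = t by omega, show (t + 1) ⊓ K = t + 1 by omega,
            ← tau_neg, neg_sub,
            tau_natCast_sub' (mj j) K (t + 1) t hmj (by omega) (by omega)]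
          omega
      calc ((w * Mn j (vmap (l (q t)) - vmap (l (q (t + 1)))) : ℕ) : ℝ)
          ≤ ((w * 1 : ℕ) : ℝ) := by exact_mod_cast Nat.mul_le_mul_left w hMn
        _ < s := by rw [hs]; push_cast; linarith
  have hub := hctrl cι _ _ hchain
  -- lower bound on the endpoint distance
  obtain ⟨istar, histar⟩ := l.proper
  have hlb : ((w * K : ℕ) : ℝ) ≤ dG (p (l (q 0))) (p (l (q K))) := by
    have hdeq := hdist (l (q 0)) (l (q K))
    rw [hdeq]
    have : K ≤ Mn j (vmap (l (q 0)) - vmap (l (q K))) := by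
      set i : Fin (dimj j) := Fin.cast hdim.symm (e istar) with hi
      have hii : e.symm (Fin.cast hdim i) = istar := by
        simp [hi, Fin.cast_cast]
      have h1 : l (q 0) istar = q 0 := Line.apply_none l _ istar histar
      have h2 : l (q K) istar = q K := Line.apply_none l _ istar histar
      have htau : tau (mj j) ((vmap (l (q 0)) - vmap (l (q K))) i) = K := by
        have hsub : (vmap (l (q 0)) - vmap (l (q K))) i
            = vmap (l (q 0)) i - vmap (l (q K)) i := rfl
        rw [hsub]
        show tau (mj j) _ = K
        simp only [vmap, hii, h1, h2]
        simp only [q]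
        rw [show (0 : ℕ) ⊓ K = 0 by omega, show K ⊓ K = K by omega,
          ← tau_neg, neg_sub,
          tau_natCast_sub' (mj j) K K 0 hmj le_rfl (by omega)]
        omega
      have hle := le_Mn j (vmap (l (q 0)) - vmap (l (q K))) i
      omega
    exact_mod_cast Nat.mul_le_mul_left w this
  -- contradiction
  have hfin : ((w * K : ℕ) : ℝ) ≤ C * s + b := le_trans hlb hub
  rw [hs] at hfin
  push_cast at hfin
  have hb1 : b ≤ |b| := le_abs_self b
  have hb0 : 0 ≤ |b| := abs_nonneg b
  nlinarith [mul_le_mul_of_nonneg_left hKR.le (le_trans zero_le_one hw1),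
    mul_le_mul_of_nonneg_right hw1 hC.le]

end LFGConstr

/-- There is a countable locally finite group with a proper left invariant metric of
infinite asymptotic Assouad-Nagata dimension: no linear-plus-constant `n`-dimensional
control function exists for any `n`. -/

theorem exists_locally_finite_group_asdimAN_infinite :
    ∃ (G : Type) (inst : Group G) (d : G → G → ℝ),
      Countable G ∧ @LocallyFiniteGroup G inst ∧ @IsPLIMetric G inst d ∧
        ∀ n : ℕ, ¬ ANdimLE d n := by
  refine ⟨LFGConstr.Gp, inferInstance, LFGConstr.dG, LFGConstr.countable_Gp,
    LFGConstr.locallyFinite_Gp,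
    ⟨LFGConstr.dG_eq_zero_iff, LFGConstr.dG_symm, LFGConstr.dG_triangle,
      LFGConstr.dG_left_inv, LFGConstr.dG_ball_finite⟩,
    LFGConstr.not_ANdimLE⟩
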